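/- Let k ≥ 1 and let s : Fin k → ℕ with s i ≥ 1 for all i. Let M be a nonnegative real square matrix indexed by Σ i, Fin (s i), partitioned into k² blocks with square diagonal blocks. Define the upward row sum contraction M↑ as the k×k matrix with entries M↑ i j = max over u ∈ Fin (s i) of Σ_{v ∈ Fin (s j)} M ((i,u),(j,v)) (the maximum row sum within block (i,j)). Then ρ(M) ≤ ρ(M↑). -/

import Mathlib

open Matrix

/-- Spectral radius of a real square matrix: the maximum of the moduli of its
complex eigenvalues (elements of the spectrum of the matrix over `ℂ`). -/
noncomputable def specRad {n : Type*} [Fintype n] [DecidableEq n]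
    (M : Matrix n n ℝ) : ℝ :=
  sSup ((fun z : ℂ => ‖z‖) '' spectrum ℂ (M.map (algebraMap ℝ ℂ)))

section auxiliary

variable {n : Type*} [Fintype n] [DecidableEq n]

/-- Any spectral value of a matrix over `ℂ` admits an eigenvector. -/
theorem SpecRadAux.exists_eigvec (A : Matrix n n ℂ) (z : ℂ)
    (hz : z ∈ spectrum ℂ A) : ∃ x, x ≠ 0 ∧ A.mulVec x = z • x := by
  have h : z ∈ spectrum ℂ (Matrix.toLinAlgEquiv' A) := by
    rw [AlgEquiv.spectrum_eq]; exact hz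
  have he : Module.End.HasEigenvalue (Matrix.toLinAlgEquiv' A) z :=
    (Module.End.hasEigenvalue_iff_mem_spectrum).mpr h
  obtain ⟨x, hx⟩ := he.exists_hasEigenvector
  refine ⟨x, hx.2, ?_⟩
  have := hx.1
  rw [Module.End.mem_eigenspace_iff] at this
  rw [Matrix.toLinAlgEquiv'_apply] at this; exact this

attribute [local instance] Matrix.linftyOpNormedRing Matrix.linftyOpNormedAlgebra

theorem SpecRadAux.norm_map_complex (B : Matrix n n ℝ) :
    ‖B.map (algebraMap ℝ ℂ)‖₊ = ‖B‖₊ := by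
  simp [Matrix.linfty_opNNNorm_def, Complex.nnnorm_real]

theorem SpecRadAux.pow_entries_nonneg (A : Matrix n n ℝ) (hA : ∀ i j, 0 ≤ A i j) (m : ℕ) :
    ∀ i j, 0 ≤ (A ^ m) i j := by
  induction m with
  | zero => intro i j; by_cases h : i = j <;> simp [Matrix.one_apply, h]
  | succ m ih =>
    intro i j
    rw [pow_succ, Matrix.mul_apply]
    exact Finset.sum_nonneg fun l _ => mul_nonneg (ih i l) (hA l j)

theorem SpecRadAux.specRad_nonneg [Nonempty n] (A : Matrix n n ℝ) : 0 ≤ specRad A := by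
  set a := A.map (algebraMap ℝ ℂ)
  obtain ⟨z0, hz0⟩ := spectrum.nonempty a
  have hbdd : BddAbove ((fun z : ℂ => ‖z‖) '' spectrum ℂ a) := by
    refine ⟨‖a‖, ?_⟩
    rintro x ⟨z, hz, rfl⟩
    exact spectrum.norm_le_norm_of_mem hz
  exact (norm_nonneg z0).trans (le_csSup hbdd ⟨z0, hz0, rfl⟩)

/-- If `A` is entrywise nonnegative and `c • y ≤ A *ᵥ y` for a nonzero nonnegative
vector `y`, then `c ≤ specRad A`. -/
theorem SpecRadAux.le_specRad_of_subinvariant [Nonempty n]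
    (A : Matrix n n ℝ) (hA : ∀ i j, 0 ≤ A i j) (c : ℝ) (hc : 0 ≤ c)
    (y : n → ℝ) (hy : ∀ i, 0 ≤ y i) (hy0 : y ≠ 0)
    (h : ∀ i, c * y i ≤ A.mulVec y i) : c ≤ specRad A := by
  classical
  obtain ⟨i0, -, hi0⟩ := Finset.exists_max_image Finset.univ y Finset.univ_nonempty
  have hi0pos : 0 < y i0 := by
    rcases (hy i0).lt_or_eq with h' | h'
    · exact h'
    · exfalso; apply hy0; funext j
      have := hi0 j (Finset.mem_univ j)
      have := hy j
      have : y j = 0 := le_antisymm (by rw [h'] at *; linarith [hi0 j (Finset.mem_univ j)]) (hy j)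
      simpa using this
  have key : ∀ m : ℕ, ∀ i, c ^ m * y i ≤ ((A ^ m) *ᵥ y) i := by
    intro m
    induction m with
    | zero => intro i; simp
    | succ m ih =>
      intro i
      have h1 : c ^ (m + 1) * y i ≤ c * (((A ^ m) *ᵥ y) i) := by
        calc c ^ (m+1) * y i = c * (c ^ m * y i) := by ring
        _ ≤ c * (((A ^ m) *ᵥ y) i) := mul_le_mul_of_nonneg_left (ih i) hc
      have h2 : c * (((A ^ m) *ᵥ y) i) ≤ ((A ^ (m+1)) *ᵥ y) i := by
        have e1 : ((A ^ (m+1)) *ᵥ y) i = ((A ^ m) *ᵥ (A *ᵥ y)) i := by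
          rw [pow_succ, ← Matrix.mulVec_mulVec]
        rw [e1, Matrix.mulVec, Matrix.mulVec, dotProduct, dotProduct,
          Finset.mul_sum]
        refine Finset.sum_le_sum fun j _ => ?_
        rw [mul_left_comm]
        exact mul_le_mul_of_nonneg_left (h j) (SpecRadAux.pow_entries_nonneg A hA m i j)
      exact h1.trans h2
  have rowbound : ∀ m : ℕ, ((A ^ m) *ᵥ y) i0 ≤ ‖A ^ m‖ * y i0 := by
    intro m
    have h1 : ((A ^ m) *ᵥ y) i0 ≤ (∑ j, (A ^ m) i0 j) * y i0 := by
      rw [Matrix.mulVec, dotProduct, Finset.sum_mul]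
      exact Finset.sum_le_sum fun j _ =>
        mul_le_mul_of_nonneg_left (hi0 j (Finset.mem_univ j))
          (SpecRadAux.pow_entries_nonneg A hA m i0 j)
    have h2 : (∑ j, (A ^ m) i0 j) ≤ ‖A ^ m‖ := by
      have hle : (∑ j, (A ^ m) i0 j) ≤ ‖(A ^ m) *ᵥ (1 : n → ℝ)‖ := by
        have e : ((A ^ m) *ᵥ (1 : n → ℝ)) i0 = ∑ j, (A ^ m) i0 j := by
          simp [Matrix.mulVec, dotProduct]
        calc (∑ j, (A ^ m) i0 j) = ((A ^ m) *ᵥ (1 : n → ℝ)) i0 := e.symm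
        _ ≤ ‖((A ^ m) *ᵥ (1 : n → ℝ)) i0‖ := le_abs_self _
        _ ≤ ‖(A ^ m) *ᵥ (1 : n → ℝ)‖ := norm_le_pi_norm _ i0
      refine hle.trans ?_
      calc ‖(A ^ m) *ᵥ (1 : n → ℝ)‖ ≤ ‖A ^ m‖ * ‖(1 : n → ℝ)‖ :=
        Matrix.linfty_opNorm_mulVec _ _
      _ = ‖A ^ m‖ := by rw [norm_one, mul_one]
    calc ((A ^ m) *ᵥ y) i0 ≤ (∑ j, (A ^ m) i0 j) * y i0 := h1
    _ ≤ ‖A ^ m‖ * y i0 := mul_le_mul_of_nonneg_right h2 (hy i0)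
  have hcm : ∀ m : ℕ, c ^ m ≤ ‖A ^ m‖ := fun m =>
    le_of_mul_le_mul_right ((key m i0).trans (rowbound m)) hi0pos
  set a : Matrix n n ℂ := A.map (algebraMap ℝ ℂ) with ha
  have hpow : ∀ m : ℕ, ‖a ^ m‖ = ‖A ^ m‖ := by
    intro m
    have e : a ^ m = (A ^ m).map (algebraMap ℝ ℂ) := by
      rw [ha, ← RingHom.mapMatrix_apply, ← RingHom.mapMatrix_apply, map_pow]
    rw [e, ← coe_nnnorm, ← coe_nnnorm, SpecRadAux.norm_map_complex]
  have hgel : ENNReal.ofReal c ≤ spectralRadius ℂ a := by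
    refine ge_of_tendsto (spectrum.pow_norm_pow_one_div_tendsto_nhds_spectralRadius a) ?_
    filter_upwards [Filter.eventually_ge_atTop 1] with m hm
    refine ENNReal.ofReal_le_ofReal ?_
    have h1 : c = (c ^ m) ^ (1 / (m:ℝ)) := by
      rw [← Real.rpow_natCast c m, ← Real.rpow_mul hc]
      have hm0 : (m:ℝ) ≠ 0 := Nat.cast_ne_zero.mpr (by omega)
      rw [mul_one_div, div_self hm0, Real.rpow_one]
    rw [h1, hpow m]
    exact Real.rpow_le_rpow (pow_nonneg hc m) (hcm m) (by positivity)
  have hup : spectralRadius ℂ a ≤ ENNReal.ofReal (specRad A) := by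
    rw [spectralRadius]
    refine iSup₂_le fun z hz => ?_
    rw [← ENNReal.ofReal_coe_nnreal, coe_nnnorm]
    refine ENNReal.ofReal_le_ofReal ?_
    have hbdd : BddAbove ((fun z : ℂ => ‖z‖) '' spectrum ℂ a) := by
      refine ⟨‖a‖, ?_⟩
      rintro x ⟨w, hw, rfl⟩
      exact spectrum.norm_le_norm_of_mem hw
    exact le_csSup hbdd ⟨z, hz, rfl⟩
  exact (ENNReal.ofReal_le_ofReal_iff (SpecRadAux.specRad_nonneg A)).mp (hgel.trans hup)

end auxiliary

/-- The spectral radius of a nonnegative matrix is at most the spectral radius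
of its upward row sum contraction (maximum row sum in each block, with square
diagonal blocks). -/
theorem specRad_le_upwardRowSumContraction
    {k : ℕ} (hk : 1 ≤ k) (s : Fin k → ℕ) (hs : ∀ i, 1 ≤ s i)
    (M : Matrix (Σ i, Fin (s i)) (Σ i, Fin (s i)) ℝ)
    (hM : ∀ p q, 0 ≤ M p q) :
    specRad M ≤
      specRad (Matrix.of fun (i j : Fin k) =>
        Finset.univ.sup'
          (Finset.univ_nonempty_iff.mpr (Fin.pos_iff_nonempty.mp (hs i)))
          (fun u : Fin (s i) => ∑ v : Fin (s j), M ⟨i, u⟩ ⟨j, v⟩)) := by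
  classical
  have hkne : Nonempty (Fin k) := Fin.pos_iff_nonempty.mp hk
  have hsne : ∀ i : Fin k, Nonempty (Fin (s i)) := fun i => Fin.pos_iff_nonempty.mp (hs i)
  set A : Matrix (Fin k) (Fin k) ℝ := Matrix.of fun (i j : Fin k) =>
        Finset.univ.sup'
          (Finset.univ_nonempty_iff.mpr (Fin.pos_iff_nonempty.mp (hs i)))
          (fun u : Fin (s i) => ∑ v : Fin (s j), M ⟨i, u⟩ ⟨j, v⟩) with hA
  refine Real.sSup_le ?_ (SpecRadAux.specRad_nonneg A)
  rintro _ ⟨z, hz, rfl⟩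
  obtain ⟨x, hx0, hx⟩ := SpecRadAux.exists_eigvec (M.map (algebraMap ℝ ℂ)) z hz
  set y : Fin k → ℝ := fun i =>
    Finset.univ.sup' (Finset.univ_nonempty_iff.mpr (hsne i))
      (fun u : Fin (s i) => ‖x ⟨i, u⟩‖) with hy
  have habs_le : ∀ (j : Fin k) (v : Fin (s j)), ‖x ⟨j, v⟩‖ ≤ y j := by
    intro j v
    rw [hy]
    exact Finset.le_sup' (fun u : Fin (s j) => ‖x ⟨j, u⟩‖) (Finset.mem_univ v)
  have hynn : ∀ i, 0 ≤ y i := by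
    intro i
    obtain ⟨u⟩ := hsne i
    exact (norm_nonneg _).trans (habs_le i u)
  have hyne : y ≠ 0 := by
    intro hcon
    apply hx0
    funext p
    obtain ⟨i, u⟩ := p
    have h1 : ‖x ⟨i, u⟩‖ ≤ 0 := by
      have := habs_le i u
      rw [hcon] at this
      simpa using this
    simpa using le_antisymm h1 (norm_nonneg _)
  have hAnn : ∀ i j, 0 ≤ A i j := by
    intro i j
    obtain ⟨u⟩ := hsne i
    refine le_trans (Finset.sum_nonneg fun v _ => hM ⟨i,u⟩ _)
      (Finset.le_sup' (fun u : Fin (s i) => ∑ v : Fin (s j), M ⟨i, u⟩ ⟨j, v⟩)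
        (Finset.mem_univ u))
  have hsub : ∀ i, ‖z‖ * y i ≤ A.mulVec y i := by
    intro i
    obtain ⟨u, -, hu⟩ := Finset.exists_mem_eq_sup' (Finset.univ_nonempty_iff.mpr (hsne i))
      (fun u : Fin (s i) => ‖x ⟨i, u⟩‖)
    have e1 : ‖z‖ * y i = ‖z * x ⟨i, u⟩‖ := by
      rw [norm_mul, show y i = ‖x ⟨i, u⟩‖ from hu]
    have e2 : z * x ⟨i, u⟩ = ((M.map (algebraMap ℝ ℂ)) *ᵥ x) ⟨i, u⟩ := by
      rw [hx]; simp
    rw [e1, e2, Matrix.mulVec, dotProduct]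
    calc ‖∑ q, (M.map (algebraMap ℝ ℂ)) ⟨i,u⟩ q * x q‖
        ≤ ∑ q, ‖(M.map (algebraMap ℝ ℂ)) ⟨i,u⟩ q * x q‖ :=
          norm_sum_le _ _
      _ = ∑ q : (Σ j, Fin (s j)), M ⟨i,u⟩ q * ‖x q‖ := by
          refine Finset.sum_congr rfl fun q _ => ?_
          rw [norm_mul, Matrix.map_apply]
          congr 1
          simp [Complex.norm_real, abs_of_nonneg (hM _ q)]
      _ = ∑ j : Fin k, ∑ v : Fin (s j), M ⟨i,u⟩ ⟨j,v⟩ * ‖x ⟨j,v⟩‖ := by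
          rw [← Finset.univ_sigma_univ, Finset.sum_sigma]
      _ ≤ ∑ j : Fin k, ∑ v : Fin (s j), M ⟨i,u⟩ ⟨j,v⟩ * y j := by
          refine Finset.sum_le_sum fun j _ => Finset.sum_le_sum fun v _ => ?_
          exact mul_le_mul_of_nonneg_left (habs_le j v) (hM _ _)
      _ = ∑ j : Fin k, (∑ v : Fin (s j), M ⟨i,u⟩ ⟨j,v⟩) * y j := by
          refine Finset.sum_congr rfl fun j _ => ?_
          rw [Finset.sum_mul]
      _ ≤ ∑ j : Fin k, A i j * y j := by
          refine Finset.sum_le_sum fun j _ => ?_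
          refine mul_le_mul_of_nonneg_right ?_ (hynn j)
          exact Finset.le_sup' (fun u : Fin (s i) => ∑ v : Fin (s j), M ⟨i, u⟩ ⟨j, v⟩)
            (Finset.mem_univ u)
      _ = A.mulVec y i := rfl
  exact SpecRadAux.le_specRad_of_subinvariant A hAnn (‖z‖)
    (norm_nonneg z) y hynn hyne hsub
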